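/- Alternative semilinear form of the Euler–Lagrange equation (Proposition A.3). Suppose φ is smooth, g > 0 and g̊ > 0 everywhere, and φ satisfies the Euler–Lagrange equation ∂_u(∂_ūφ·g^{−1/2}) + ∂_ū((∂_uφ + Ψ'(u) − (Ψ'(u))²·∂_ūφ)·g^{−1/2}) = 0. Then at every point g^{uu}·∂_u²φ + 2·g^{uū}·∂_u∂_ūφ + g^{ūū}·∂_ū²φ = R̃₀, where R̃₀ := (g̊·g)^{−1}·[ 2·(2Ψ'(u)+∂_uφ)·∂_uφ·Ψ'(u)·∂_ūφ·∂_ū²φ − (2Ψ'(u)+∂_uφ)·∂_uφ·(Ψ'(u))²·(∂_ūφ)²·∂_ū²φ + (1+3g)·Ψ'(u)·∂_ūφ·∂_ū∂_uφ + 2·Ψ'(u)·∂_uφ·(∂_ūφ)²·∂_u∂_ūφ + (2∂_uφ − Ψ'(u))·(Ψ'(u))²·(∂_ūφ)³·∂_u∂_ūφ + 2·Ψ'(u)·(∂_ūφ)³·∂_u²φ − (Ψ'(u))²·(∂_ūφ)⁴·∂_u²φ + (1 − Ψ'(u)·∂_ūφ)·Ψ''(u)·(∂_ūφ)² ]. 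-/

import Mathlib

noncomputable section

/-- partial derivative in the first variable (`∂_u`) -/
def pd1 (f : ℝ × ℝ → ℝ) (p : ℝ × ℝ) : ℝ := deriv (fun s => f (s, p.2)) p.1

/-- partial derivative in the second variable (`∂_ū`) -/
def pd2 (f : ℝ × ℝ → ℝ) (p : ℝ × ℝ) : ℝ := deriv (fun s => f (p.1, s)) p.2

/-- the determinant `g = 1 − 2∂_uφ∂_ūφ − 2Ψ'(u)∂_ūφ + (Ψ'(u))²(∂_ūφ)²` -/
def gmet (Ψ : ℝ → ℝ) (φ : ℝ × ℝ → ℝ) (p : ℝ × ℝ) : ℝ :=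
  1 - 2 * pd1 φ p * pd2 φ p - 2 * deriv Ψ p.1 * pd2 φ p
    + (deriv Ψ p.1)^2 * (pd2 φ p)^2

/-- the linear-truncation determinant `g̊ = (1 − Ψ'(u)∂_ūφ)²` -/
def gring (Ψ : ℝ → ℝ) (φ : ℝ × ℝ → ℝ) (p : ℝ × ℝ) : ℝ :=
  (1 - deriv Ψ p.1 * pd2 φ p)^2

/-- inverse metric component `g^{uu} = −(∂_ūφ)²/g` -/
def guu (Ψ : ℝ → ℝ) (φ : ℝ × ℝ → ℝ) (p : ℝ × ℝ) : ℝ :=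
  -(pd2 φ p)^2 / gmet Ψ φ p

/-- inverse metric component `g^{uū} = g^{ūu} = (−1 + Ψ'(u)∂_ūφ + ∂_uφ∂_ūφ)/g` -/
def guub (Ψ : ℝ → ℝ) (φ : ℝ × ℝ → ℝ) (p : ℝ × ℝ) : ℝ :=
  (-1 + deriv Ψ p.1 * pd2 φ p + pd1 φ p * pd2 φ p) / gmet Ψ φ p

/-- inverse metric component `g^{ūū} = −(2Ψ'(u) + ∂_uφ)∂_uφ/g` -/
def gubub (Ψ : ℝ → ℝ) (φ : ℝ × ℝ → ℝ) (p : ℝ × ℝ) : ℝ :=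
  -((2 * deriv Ψ p.1 + pd1 φ p) * pd1 φ p) / gmet Ψ φ p

/-- `g^{−1/2}` as a function of the point -/
def invSqrtg (Ψ : ℝ → ℝ) (φ : ℝ × ℝ → ℝ) (p : ℝ × ℝ) : ℝ :=
  (Real.sqrt (gmet Ψ φ p))⁻¹

/-- the Euler–Lagrange expression
`∂_u(∂_ūφ·g^{−1/2}) + ∂_ū((∂_uφ + Ψ'(u) − (Ψ'(u))²∂_ūφ)·g^{−1/2})` -/
def ELexpr (Ψ : ℝ → ℝ) (φ : ℝ × ℝ → ℝ) (p : ℝ × ℝ) : ℝ :=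
  pd1 (fun q => pd2 φ q * invSqrtg Ψ φ q) p
  + pd2 (fun q => (pd1 φ q + deriv Ψ q.1 - (deriv Ψ q.1)^2 * pd2 φ q) * invSqrtg Ψ φ q) p

/-- the Laplace–Beltrami operator `□_g φ` -/
def BoxG (Ψ : ℝ → ℝ) (φ : ℝ × ℝ → ℝ) (p : ℝ × ℝ) : ℝ :=
  invSqrtg Ψ φ p *
    (pd1 (fun q => Real.sqrt (gmet Ψ φ q) * (guu Ψ φ q * pd1 φ q + guub Ψ φ q * pd2 φ q)) p
     + pd2 (fun q => Real.sqrt (gmet Ψ φ q) * (guub Ψ φ q * pd1 φ q + gubub Ψ φ q * pd2 φ q)) p)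

private lemma HasDerivAt.congr_d {f : ℝ → ℝ} {d d' x : ℝ}
    (h : HasDerivAt f d x) (e : d = d') : HasDerivAt f d' x := e ▸ h

private lemma pd1_eq_fderiv (f : ℝ × ℝ → ℝ) (q : ℝ × ℝ) (hf : DifferentiableAt ℝ f q) :
    pd1 f q = fderiv ℝ f q (1, 0) := by
  have h : HasDerivAt (fun s => f (s, q.2)) (fderiv ℝ f q (1, 0)) q.1 :=
    hf.hasFDerivAt.comp_hasDerivAt q.1 ((hasDerivAt_id q.1).prodMk (hasDerivAt_const q.1 q.2))
  exact h.deriv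

private lemma pd2_eq_fderiv (f : ℝ × ℝ → ℝ) (q : ℝ × ℝ) (hf : DifferentiableAt ℝ f q) :
    pd2 f q = fderiv ℝ f q (0, 1) := by
  have h : HasDerivAt (fun t => f (q.1, t)) (fderiv ℝ f q (0, 1)) q.2 :=
    hf.hasFDerivAt.comp_hasDerivAt q.2 ((hasDerivAt_const q.2 q.1).prodMk (hasDerivAt_id q.2))
  exact h.deriv

private lemma el_div_form (s Bv B2v Cv bv Fv gu gub wv : ℝ) (hs : s ≠ 0) :
    Bv * s⁻¹ + bv * (-(gu / (2 * s)) / s ^ 2) + ((B2v - wv ^ 2 * Cv) * s⁻¹ + Fv * (-(gub / (2 * s)) / s ^ 2))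
    = (2 * (Bv + B2v - wv ^ 2 * Cv) * s ^ 2 - (bv * gu + Fv * gub)) / (2 * s ^ 3) := by
  field_simp
  ring


private lemma hone : ((⊤:ℕ∞) : WithTop ℕ∞) ≠ 0 := by simp
private lemma htwo : minSmoothness ℝ 2 ≤ ((⊤:ℕ∞) : WithTop ℕ∞) := by
  rw [minSmoothness_of_isRCLikeNormedField]
  have : ((2:ℕ∞) : WithTop ℕ∞) ≤ ((⊤:ℕ∞) : WithTop ℕ∞) := WithTop.coe_le_coe.mpr le_top
  simpa using this

private lemma htop' : ((⊤:ℕ∞) : WithTop ℕ∞) + 1 ≤ ((⊤:ℕ∞) : WithTop ℕ∞) := by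
  simp

private lemma contDiff_pd1 (f : ℝ × ℝ → ℝ) (hf : ContDiff ℝ (⊤:ℕ∞) f) :
    ContDiff ℝ (⊤:ℕ∞) (pd1 f) := by
  have h : ContDiff ℝ (⊤:ℕ∞) (fun q => fderiv ℝ f q (1, 0)) :=
    (hf.fderiv_right htop').clm_apply contDiff_const
  have e : pd1 f = fun q => fderiv ℝ f q (1, 0) :=
    funext fun q => pd1_eq_fderiv f q (hf.differentiable hone q)
  rw [e]; exact h

private lemma contDiff_pd2 (f : ℝ × ℝ → ℝ) (hf : ContDiff ℝ (⊤:ℕ∞) f) :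
    ContDiff ℝ (⊤:ℕ∞) (pd2 f) := by
  have h : ContDiff ℝ (⊤:ℕ∞) (fun q => fderiv ℝ f q (0, 1)) :=
    (hf.fderiv_right htop').clm_apply contDiff_const
  have e : pd2 f = fun q => fderiv ℝ f q (0, 1) :=
    funext fun q => pd2_eq_fderiv f q (hf.differentiable hone q)
  rw [e]; exact h

private lemma pd_comm (φ : ℝ × ℝ → ℝ) (hφ : ContDiff ℝ (⊤:ℕ∞) φ) (p : ℝ × ℝ) :
    pd1 (pd2 φ) p = pd2 (pd1 φ) p := by
  have hd1 : ContDiff ℝ (⊤:ℕ∞) (fun q => fderiv ℝ φ q (1, 0)) :=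
    (hφ.fderiv_right htop').clm_apply contDiff_const
  have hd2 : ContDiff ℝ (⊤:ℕ∞) (fun q => fderiv ℝ φ q (0, 1)) :=
    (hφ.fderiv_right htop').clm_apply contDiff_const
  have hfd : DifferentiableAt ℝ (fderiv ℝ φ) p :=
    ((hφ.fderiv_right htop').differentiable hone).differentiableAt
  have e2 : pd2 φ = fun q => fderiv ℝ φ q (0, 1) :=
    funext fun q => pd2_eq_fderiv φ q (hφ.differentiable hone q)
  have e1 : pd1 φ = fun q => fderiv ℝ φ q (1, 0) :=
    funext fun q => pd1_eq_fderiv φ q (hφ.differentiable hone q)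
  rw [e2, e1, pd1_eq_fderiv _ p ((hd2.differentiable hone) p),
      pd2_eq_fderiv _ p ((hd1.differentiable hone) p),
      fderiv_clm_apply hfd (differentiableAt_const _),
      fderiv_clm_apply hfd (differentiableAt_const _)]
  simp only [fderiv_const, fderiv_const_apply, Pi.zero_apply, ContinuousLinearMap.comp_zero, zero_add,
    ContinuousLinearMap.add_apply, ContinuousLinearMap.flip_apply,
    ContinuousLinearMap.zero_apply]
  exact (hφ.contDiffAt.isSymmSndFDerivAt htwo).eq (1, 0) (0, 1)

private lemma hasDerivAt_line1 (f : ℝ × ℝ → ℝ) (hf : ContDiff ℝ (⊤:ℕ∞) f) (p : ℝ × ℝ) :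
    HasDerivAt (fun s => f (s, p.2)) (pd1 f p) p.1 := by
  have h : DifferentiableAt ℝ (fun s => f (s, p.2)) p.1 :=
    (hf.differentiable hone p).comp p.1 (differentiableAt_id.prodMk (differentiableAt_const p.2))
  exact h.hasDerivAt

private lemma hasDerivAt_line2 (f : ℝ × ℝ → ℝ) (hf : ContDiff ℝ (⊤:ℕ∞) f) (p : ℝ × ℝ) :
    HasDerivAt (fun t => f (p.1, t)) (pd2 f p) p.2 := by
  have h : DifferentiableAt ℝ (fun t => f (p.1, t)) p.2 :=
    (hf.differentiable hone p).comp p.2 ((differentiableAt_const p.1).prodMk differentiableAt_id)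
  exact h.hasDerivAt

/-- **Alternative semilinear form of the Euler–Lagrange equation (Proposition A.3).**
If `φ` is smooth with `g > 0`, `g̊ > 0` everywhere and satisfies the Euler–Lagrange equation,
then `g^{uu}∂_u²φ + 2g^{uū}∂_u∂_ūφ + g^{ūū}∂_ū²φ = R̃₀`. -/
theorem euler_lagrange_alternative_semilinear_form
    (Ψ : ℝ → ℝ) (φ : ℝ × ℝ → ℝ)
    (hΨ : ContDiff ℝ (⊤ : ℕ∞) Ψ) (hφ : ContDiff ℝ (⊤ : ℕ∞) φ)
    (hg : ∀ p : ℝ × ℝ, 0 < gmet Ψ φ p) (hgr : ∀ p : ℝ × ℝ, 0 < gring Ψ φ p)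
    (hEL : ∀ p : ℝ × ℝ, ELexpr Ψ φ p = 0) :
    ∀ p : ℝ × ℝ,
      guu Ψ φ p * pd1 (pd1 φ) p + 2 * guub Ψ φ p * pd1 (pd2 φ) p
          + gubub Ψ φ p * pd2 (pd2 φ) p
        = (gring Ψ φ p * gmet Ψ φ p)⁻¹ *
            (2 * (2 * deriv Ψ p.1 + pd1 φ p) * pd1 φ p * deriv Ψ p.1 * pd2 φ p * pd2 (pd2 φ) p
             - (2 * deriv Ψ p.1 + pd1 φ p) * pd1 φ p * (deriv Ψ p.1)^2 * (pd2 φ p)^2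
                 * pd2 (pd2 φ) p
             + (1 + 3 * gmet Ψ φ p) * deriv Ψ p.1 * pd2 φ p * pd2 (pd1 φ) p
             + 2 * deriv Ψ p.1 * pd1 φ p * (pd2 φ p)^2 * pd1 (pd2 φ) p
             + (2 * pd1 φ p - deriv Ψ p.1) * (deriv Ψ p.1)^2 * (pd2 φ p)^3 * pd1 (pd2 φ) p
             + 2 * deriv Ψ p.1 * (pd2 φ p)^3 * pd1 (pd1 φ) p
             - (deriv Ψ p.1)^2 * (pd2 φ p)^4 * pd1 (pd1 φ) p
             + (1 - deriv Ψ p.1 * pd2 φ p) * deriv (deriv Ψ) p.1 * (pd2 φ p)^2) := by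
  intro p
  have hp1 : ContDiff ℝ (⊤:ℕ∞) (pd1 φ) := contDiff_pd1 φ hφ
  have hp2 : ContDiff ℝ (⊤:ℕ∞) (pd2 φ) := contDiff_pd2 φ hφ
  have hΨ1 : ContDiff ℝ (⊤:ℕ∞) (deriv Ψ) := (contDiff_infty_iff_deriv.mp hΨ).2
  have hGpos : (0:ℝ) < gmet Ψ φ p := hg p
  have hGne : gmet Ψ φ p ≠ 0 := ne_of_gt hGpos
  have hSpos : 0 < Real.sqrt (gmet Ψ φ p) := Real.sqrt_pos.mpr hGpos
  have hSne : Real.sqrt (gmet Ψ φ p) ≠ 0 := ne_of_gt hSpos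
  have hS2 : Real.sqrt (gmet Ψ φ p) ^ 2 = gmet Ψ φ p := Real.sq_sqrt hGpos.le
  have ha1 : HasDerivAt (fun s => pd1 φ (s, p.2)) (pd1 (pd1 φ) p) p.1 := hasDerivAt_line1 _ hp1 p
  have hb1 : HasDerivAt (fun s => pd2 φ (s, p.2)) (pd1 (pd2 φ) p) p.1 := hasDerivAt_line1 _ hp2 p
  have hc1 : HasDerivAt (fun s => deriv Ψ s) (deriv (deriv Ψ) p.1) p.1 :=
    ((hΨ1.differentiable hone) p.1).hasDerivAt
  have ha2 : HasDerivAt (fun t => pd1 φ (p.1, t)) (pd2 (pd1 φ) p) p.2 := hasDerivAt_line2 _ hp1 p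
  have hb2 : HasDerivAt (fun t => pd2 φ (p.1, t)) (pd2 (pd2 φ) p) p.2 := hasDerivAt_line2 _ hp2 p
  have hg1 : HasDerivAt (fun s => gmet Ψ φ (s, p.2)) (-2 * (pd1 (pd1 φ) p * pd2 φ p + pd1 φ p * pd1 (pd2 φ) p) - 2 * (deriv (deriv Ψ) p.1 * pd2 φ p + deriv Ψ p.1 * pd1 (pd2 φ) p) + 2 * deriv Ψ p.1 * deriv (deriv Ψ) p.1 * pd2 φ p ^ 2 + 2 * deriv Ψ p.1 ^ 2 * pd2 φ p * pd1 (pd2 φ) p) p.1 := by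
    have h := (((hasDerivAt_const p.1 (1:ℝ)).sub ((ha1.const_mul 2).mul hb1)).sub
      ((hc1.const_mul 2).mul hb1)).add ((hc1.pow 2).mul (hb1.pow 2))
    exact h.congr_d (by simp only [Pi.pow_apply]; ring)
  have hg2 : HasDerivAt (fun t => gmet Ψ φ (p.1, t)) (-2 * (pd2 (pd1 φ) p * pd2 φ p + pd1 φ p * pd2 (pd2 φ) p) - 2 * deriv Ψ p.1 * pd2 (pd2 φ) p + 2 * deriv Ψ p.1 ^ 2 * pd2 φ p * pd2 (pd2 φ) p) p.2 := by
    have h := (((hasDerivAt_const p.2 (1:ℝ)).sub ((ha2.const_mul 2).mul hb2)).sub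
      (hb2.const_mul (2 * deriv Ψ p.1))).add ((hb2.pow 2).const_mul (deriv Ψ p.1 ^ 2))
    exact h.congr_d (by ring)
  have hq1 : HasDerivAt (fun s => Real.sqrt (gmet Ψ φ (s, p.2))) ((-2 * (pd1 (pd1 φ) p * pd2 φ p + pd1 φ p * pd1 (pd2 φ) p) - 2 * (deriv (deriv Ψ) p.1 * pd2 φ p + deriv Ψ p.1 * pd1 (pd2 φ) p) + 2 * deriv Ψ p.1 * deriv (deriv Ψ) p.1 * pd2 φ p ^ 2 + 2 * deriv Ψ p.1 ^ 2 * pd2 φ p * pd1 (pd2 φ) p) / (2 * Real.sqrt (gmet Ψ φ p))) p.1 :=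
    hg1.sqrt hGne
  have hq1' : HasDerivAt (fun s => invSqrtg Ψ φ (s, p.2))
      (-((-2 * (pd1 (pd1 φ) p * pd2 φ p + pd1 φ p * pd1 (pd2 φ) p) - 2 * (deriv (deriv Ψ) p.1 * pd2 φ p + deriv Ψ p.1 * pd1 (pd2 φ) p) + 2 * deriv Ψ p.1 * deriv (deriv Ψ) p.1 * pd2 φ p ^ 2 + 2 * deriv Ψ p.1 ^ 2 * pd2 φ p * pd1 (pd2 φ) p) / (2 * Real.sqrt (gmet Ψ φ p))) / Real.sqrt (gmet Ψ φ p) ^ 2) p.1 := hq1.inv hSne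
  have hq2 : HasDerivAt (fun t => Real.sqrt (gmet Ψ φ (p.1, t))) ((-2 * (pd2 (pd1 φ) p * pd2 φ p + pd1 φ p * pd2 (pd2 φ) p) - 2 * deriv Ψ p.1 * pd2 (pd2 φ) p + 2 * deriv Ψ p.1 ^ 2 * pd2 φ p * pd2 (pd2 φ) p) / (2 * Real.sqrt (gmet Ψ φ p))) p.2 :=
    hg2.sqrt hGne
  have hq2' : HasDerivAt (fun t => invSqrtg Ψ φ (p.1, t))
      (-((-2 * (pd2 (pd1 φ) p * pd2 φ p + pd1 φ p * pd2 (pd2 φ) p) - 2 * deriv Ψ p.1 * pd2 (pd2 φ) p + 2 * deriv Ψ p.1 ^ 2 * pd2 φ p * pd2 (pd2 φ) p) / (2 * Real.sqrt (gmet Ψ φ p))) / Real.sqrt (gmet Ψ φ p) ^ 2) p.2 := hq2.inv hSne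
  have hT1 : HasDerivAt (fun s => pd2 φ (s, p.2) * invSqrtg Ψ φ (s, p.2))
      (pd1 (pd2 φ) p * (Real.sqrt (gmet Ψ φ p))⁻¹ + pd2 φ p * (-((-2 * (pd1 (pd1 φ) p * pd2 φ p + pd1 φ p * pd1 (pd2 φ) p) - 2 * (deriv (deriv Ψ) p.1 * pd2 φ p + deriv Ψ p.1 * pd1 (pd2 φ) p) + 2 * deriv Ψ p.1 * deriv (deriv Ψ) p.1 * pd2 φ p ^ 2 + 2 * deriv Ψ p.1 ^ 2 * pd2 φ p * pd1 (pd2 φ) p) / (2 * Real.sqrt (gmet Ψ φ p))) / Real.sqrt (gmet Ψ φ p) ^ 2)) p.1 := hb1.mul hq1'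
  have hN2 : HasDerivAt (fun t => pd1 φ (p.1, t) + deriv Ψ p.1 - deriv Ψ p.1 ^ 2 * pd2 φ (p.1, t))
      (pd2 (pd1 φ) p - deriv Ψ p.1 ^ 2 * pd2 (pd2 φ) p) p.2 := (ha2.add_const (deriv Ψ p.1)).sub (hb2.const_mul (deriv Ψ p.1 ^ 2))
  have hT2 : HasDerivAt (fun t => (pd1 φ (p.1, t) + deriv Ψ p.1 - deriv Ψ p.1 ^ 2 * pd2 φ (p.1, t))
      * invSqrtg Ψ φ (p.1, t)) ((pd2 (pd1 φ) p - deriv Ψ p.1 ^ 2 * pd2 (pd2 φ) p) * (Real.sqrt (gmet Ψ φ p))⁻¹ + (pd1 φ p + deriv Ψ p.1 - deriv Ψ p.1 ^ 2 * pd2 φ p) * (-((-2 * (pd2 (pd1 φ) p * pd2 φ p + pd1 φ p * pd2 (pd2 φ) p) - 2 * deriv Ψ p.1 * pd2 (pd2 φ) p + 2 * deriv Ψ p.1 ^ 2 * pd2 φ p * pd2 (pd2 φ) p) / (2 * Real.sqrt (gmet Ψ φ p))) / Real.sqrt (gmet Ψ φ p) ^ 2)) p.2 := hN2.mul hq2'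
  have hEL0 : (pd1 (pd2 φ) p * (Real.sqrt (gmet Ψ φ p))⁻¹ + pd2 φ p * (-((-2 * (pd1 (pd1 φ) p * pd2 φ p + pd1 φ p * pd1 (pd2 φ) p) - 2 * (deriv (deriv Ψ) p.1 * pd2 φ p + deriv Ψ p.1 * pd1 (pd2 φ) p) + 2 * deriv Ψ p.1 * deriv (deriv Ψ) p.1 * pd2 φ p ^ 2 + 2 * deriv Ψ p.1 ^ 2 * pd2 φ p * pd1 (pd2 φ) p) / (2 * Real.sqrt (gmet Ψ φ p))) / Real.sqrt (gmet Ψ φ p) ^ 2)) + ((pd2 (pd1 φ) p - deriv Ψ p.1 ^ 2 * pd2 (pd2 φ) p) * (Real.sqrt (gmet Ψ φ p))⁻¹ + (pd1 φ p + deriv Ψ p.1 - deriv Ψ p.1 ^ 2 * pd2 φ p) * (-((-2 * (pd2 (pd1 φ) p * pd2 φ p + pd1 φ p * pd2 (pd2 φ) p) - 2 * deriv Ψ p.1 * pd2 (pd2 φ) p + 2 * deriv Ψ p.1 ^ 2 * pd2 φ p * pd2 (pd2 φ) p) / (2 * Real.sqrt (gmet Ψ φ p))) / Real.sqrt (gmet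 Ψ φ p) ^ 2)) = 0 := by
    rw [← hT1.deriv, ← hT2.deriv]; exact hEL p
  have erw : (pd1 (pd2 φ) p * (Real.sqrt (gmet Ψ φ p))⁻¹ + pd2 φ p * (-((-2 * (pd1 (pd1 φ) p * pd2 φ p + pd1 φ p * pd1 (pd2 φ) p) - 2 * (deriv (deriv Ψ) p.1 * pd2 φ p + deriv Ψ p.1 * pd1 (pd2 φ) p) + 2 * deriv Ψ p.1 * deriv (deriv Ψ) p.1 * pd2 φ p ^ 2 + 2 * deriv Ψ p.1 ^ 2 * pd2 φ p * pd1 (pd2 φ) p) / (2 * Real.sqrt (gmet Ψ φ p))) / Real.sqrt (gmet Ψ φ p) ^ 2)) + ((pd2 (pd1 φ) p - deriv Ψ p.1 ^ 2 * pd2 (pd2 φ) p) * (Real.sqrt (gmet Ψ φ p))⁻¹ + (pd1 φ p + deriv Ψ p.1 - deriv Ψ p.1 ^ 2 * pd2 φ p) * (-((-2 * (pd2 (pd1 φ) p * pd2 φ p + pd1 φ p * pd2 (pd2 φ) p) - 2 * deriv Ψ p.1 * pd2 (pd2 φ) p + 2 * deriv Ψ p.1 ^ 2 * pd2 φ p *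 pd2 (pd2 φ) p) / (2 * Real.sqrt (gmet Ψ φ p))) / Real.sqrt (gmet Ψ φ p) ^ 2))
      = (2 * (pd1 (pd2 φ) p + pd2 (pd1 φ) p - deriv Ψ p.1 ^ 2 * pd2 (pd2 φ) p) * Real.sqrt (gmet Ψ φ p) ^ 2 - (pd2 φ p * (-2 * (pd1 (pd1 φ) p * pd2 φ p + pd1 φ p * pd1 (pd2 φ) p) - 2 * (deriv (deriv Ψ) p.1 * pd2 φ p + deriv Ψ p.1 * pd1 (pd2 φ) p) + 2 * deriv Ψ p.1 * deriv (deriv Ψ) p.1 * pd2 φ p ^ 2 + 2 * deriv Ψ p.1 ^ 2 * pd2 φ p * pd1 (pd2 φ) p) + (pd1 φ p + deriv Ψ p.1 - deriv Ψ p.1 ^ 2 * pd2 φ p) * (-2 * (pd2 (pd1 φ) p * pd2 φ p + pd1 φ p * pd2 (pd2 φ) p) - 2 * deriv Ψ p.1 * pd2 (pd2 φ) p + 2 * deriv Ψ p.1 ^ 2 * pd2 φ p * pd2 (pd2 φ) p)))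
        / (2 * Real.sqrt (gmet Ψ φ p) ^ 3) :=
    el_div_form _ _ _ _ _ _ _ _ _ hSne
  rw [erw] at hEL0
  have h3 : (2 * Real.sqrt (gmet Ψ φ p) ^ 3) ≠ 0 := by positivity
  have h4 := (div_eq_zero_iff.mp hEL0).resolve_right h3
  have hP : 2 * (pd1 (pd2 φ) p + pd2 (pd1 φ) p - deriv Ψ p.1 ^ 2 * pd2 (pd2 φ) p) * gmet Ψ φ p = pd2 φ p * (-2 * (pd1 (pd1 φ) p * pd2 φ p + pd1 φ p * pd1 (pd2 φ) p) - 2 * (deriv (deriv Ψ) p.1 * pd2 φ p + deriv Ψ p.1 * pd1 (pd2 φ) p) + 2 * deriv Ψ p.1 * deriv (deriv Ψ) p.1 * pd2 φ p ^ 2 + 2 * deriv Ψ p.1 ^ 2 * pd2 φ p * pd1 (pd2 φ) p) + (pd1 φ p + deriv Ψ p.1 - deriv Ψ p.1 ^ 2 * pd2 φ p) * (-2 * (pd2 (pd1 φ) p * pd2 φ p + pd1 φ p * pd2 (pd2 φ) p) - 2 * deriv Ψ p.1 * pd2 (pd2 φ) p + 2 * deriv Ψ p.1 ^ 2 * pd2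 φ p * pd2 (pd2 φ) p) := by
    linear_combination h4 - (2 * (pd1 (pd2 φ) p + pd2 (pd1 φ) p - deriv Ψ p.1 ^ 2 * pd2 (pd2 φ) p)) * hS2
  have hGdef : gmet Ψ φ p = 1 - 2 * pd1 φ p * pd2 φ p - 2 * deriv Ψ p.1 * pd2 φ p + deriv Ψ p.1 ^ 2 * pd2 φ p ^ 2 := rfl
  have hsymm : pd1 (pd2 φ) p = pd2 (pd1 φ) p := pd_comm φ hφ p
  have main : (1 - deriv Ψ p.1 * pd2 φ p) ^ 2 *
      (-(pd2 φ p ^ 2) * pd1 (pd1 φ) p + 2 * (-1 + deriv Ψ p.1 * pd2 φ p + pd1 φ p * pd2 φ p) * pd1 (pd2 φ) p - (2 * deriv Ψ p.1 + pd1 φ p) * pd1 φ p * pd2 (pd2 φ) p)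
      = 2 * (2 * deriv Ψ p.1 + pd1 φ p) * pd1 φ p * deriv Ψ p.1 * pd2 φ p * pd2 (pd2 φ) p - (2 * deriv Ψ p.1 + pd1 φ p) * pd1 φ p * deriv Ψ p.1 ^ 2 * pd2 φ p ^ 2 * pd2 (pd2 φ) p + (1 + 3 * gmet Ψ φ p) * deriv Ψ p.1 * pd2 φ p * pd2 (pd1 φ) p + 2 * deriv Ψ p.1 * pd1 φ p * pd2 φ p ^ 2 * pd1 (pd2 φ) p + (2 * pd1 φ p - deriv Ψ p.1) * deriv Ψ p.1 ^ 2 * pd2 φ p ^ 3 * pd1 (pd2 φ) p + 2 * deriv Ψ p.1 * pd2 φ p ^ 3 * pd1 (pd1 φ) p - deriv Ψ p.1 ^ 2 * pd2 φ p ^ 4 * pd1 (pd1 φ) p + (1 - deriv Ψ p.1 * pd2 φ p) * deriv (deriv Ψ) p.1 * pd2 φ p ^ 2 := by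
    linear_combination (-(1:ℝ)/2) * hP + (pd2 (pd1 φ) p + pd1 (pd2 φ) p - deriv Ψ p.1 ^ 2 * pd2 (pd2 φ) p - 3 * pd2 φ p * deriv Ψ p.1 * pd2 (pd1 φ) p) * hGdef + (-1 + 5 * pd2 φ p * deriv Ψ p.1 - 6 * pd2 φ p ^ 2 * deriv Ψ p.1 ^ 2 + 3 * pd2 φ p ^ 3 * deriv Ψ p.1 ^ 3 + pd1 φ p * pd2 φ p - 6 * pd1 φ p * pd2 φ p ^ 2 * deriv Ψ p.1) * hsymm
  have hgrne : (1 - deriv Ψ p.1 * pd2 φ p) ≠ 0 := by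
    have h0 : (0:ℝ) < (1 - deriv Ψ p.1 * pd2 φ p) ^ 2 := hgr p
    exact fun h => by rw [h] at h0; simp at h0
  simp only [guu, guub, gubub, gring]
  field_simp
  rw [eq_div_iff (pow_ne_zero 2 (by rwa [mul_comm] at hgrne))]
  linear_combination main
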